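/- Let n ≥ 1, r ∈ ℕ with r ≥ 1, γ ∈ (0,1/2), and let D_ω be a dyadic grid on ℝ^n. Let I, J ∈ D_ω and let K ∈ D_ω be good (with parameters r, γ), with ℓ(K) ≤ ℓ(I) = 2ℓ(J). If max{d(K,I), d(K,J)} ≤ 2 ℓ(K)^γ ℓ(J)^{1−γ} and moreover K ∩ I = ∅ or K = I or K ∩ J = ∅, then there exists a cube Q ∈ D_ω such that I ∪ J ∪ K ⊂ Q and ℓ(Q) ≤ 2^r ℓ(K). -/

import Mathlib

open MeasureTheory Set
open scoped ENNReal NNReal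

noncomputable section

abbrev Rn (n : ℕ) := Fin n → ℝ

/-- A (half-open, axis-parallel) cube in `ℝⁿ` (with the `ℓ^∞` metric),
given by its lower-left corner and its (positive) sidelength. -/
structure Cube (n : ℕ) where
  corner : Fin n → ℝ
  len : ℝ
  len_pos : 0 < len

namespace Cube

/-- The underlying set `∏_i [aᵢ, aᵢ + ℓ)` of a cube. -/
def toSet {n : ℕ} (I : Cube n) : Set (Rn n) :=
  {x | ∀ i, I.corner i ≤ x i ∧ x i < I.corner i + I.len}

/-- The center of a cube. -/
def center {n : ℕ} (I : Cube n) : Rn n := fun i => I.corner i + I.len / 2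

/-- `λI`: the cube with the same center and sidelength `λ ℓ(I)`. -/
def dilate {n : ℕ} (I : Cube n) (lam : ℝ) (hlam : 0 < lam) : Cube n :=
  ⟨fun i => I.center i - lam * I.len / 2, lam * I.len, mul_pos hlam I.len_pos⟩

end Cube

/-- The unit cube `𝕀 = [-1/2, 1/2)^n`. -/
def unitCube (n : ℕ) : Cube n := ⟨fun _ => -(1 / 2 : ℝ), 1, one_pos⟩

/-- The distance `d(E, F) = inf {|x - y| : x ∈ E, y ∈ F}` between two sets. -/
def sDist {α : Type*} [PseudoMetricSpace α] (E F : Set α) : ℝ :=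
  sInf ((fun q : α × α => dist q.1 q.2) '' (E ×ˢ F))

/-- The relative distance `rd(I, J) = d(I, J) / max{ℓ(I), ℓ(J)}` between two cubes. -/
def relDist {n : ℕ} (I J : Cube n) : ℝ :=
  sDist I.toSet J.toSet / max I.len J.len

/-- The cube `2^{-k}([0,1)^n + m) + Σ_{j > k} 2^{-j} ω^j` of the random dyadic grid `D_ω`. -/
def gridCube (n : ℕ) (ω : ℤ → Rn n) (k : ℤ) (m : Fin n → ℤ) : Cube n :=
  ⟨fun i => (2 : ℝ) ^ (-k) * (m i : ℝ) + ∑' j : {j : ℤ // k < j}, (2 : ℝ) ^ (-j.1) * ω j.1 i,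
   (2 : ℝ) ^ (-k), by positivity⟩

/-- Membership in the dyadic grid `D_ω`. -/
def memGrid {n : ℕ} (ω : ℤ → Rn n) (I : Cube n) : Prop :=
  ∃ (k : ℤ) (m : Fin n → ℤ), I = gridCube n ω k m

/-- `ω` is an admissible dyadic-grid parameter: `ω^j ∈ {0,1}^n` for all `j ∈ ℤ`. -/
def IsGridParam {n : ℕ} (ω : ℤ → Rn n) : Prop :=
  ∀ (j : ℤ) (i : Fin n), ω j i = 0 ∨ ω j i = 1

/-- `K ∈ D_ω` is good (with parameters `r`, `γ`) if every `J ∈ D_ω` with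
`ℓ(J) ≥ 2^r ℓ(K)` satisfies `d(K, ∂J) > 2 ℓ(K)^γ ℓ(J)^{1-γ}`. -/
def IsGoodCube {n : ℕ} (ω : ℤ → Rn n) (r : ℕ) (γ : ℝ) (K : Cube n) : Prop :=
  ∀ J : Cube n, memGrid ω J → (2 : ℝ) ^ r * K.len ≤ J.len →
    2 * K.len ^ γ * J.len ^ (1 - γ) < sDist K.toSet (frontier J.toSet)


section AuxMetric

lemma sDist_le_dist {α : Type*} [PseudoMetricSpace α] {E F : Set α} {x y : α}
    (hx : x ∈ E) (hy : y ∈ F) : sDist E F ≤ dist x y := by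
  apply csInf_le
  · exact ⟨0, fun t ht => by
      rcases ht with ⟨q, _, rfl⟩; exact dist_nonneg⟩
  · exact ⟨(x, y), ⟨hx, hy⟩, rfl⟩

lemma le_sDist {α : Type*} [PseudoMetricSpace α] {E F : Set α} {c : ℝ}
    (hE : E.Nonempty) (hF : F.Nonempty) (h : ∀ x ∈ E, ∀ y ∈ F, c ≤ dist x y) :
    c ≤ sDist E F := by
  apply le_csInf
  · exact ⟨_, ⟨(hE.choose, hF.choose), ⟨hE.choose_spec, hF.choose_spec⟩, rfl⟩⟩
  · rintro t ⟨q, ⟨hq1, hq2⟩, rfl⟩; exact h _ hq1 _ hq2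

lemma exists_frontier_dist {n : ℕ} (S : Set (Rn n)) {x y : Rn n} (hx : x ∈ S) (hy : y ∉ S) :
    ∃ z ∈ frontier S, dist x z ≤ dist x y := by
  have hseg : IsPreconnected (segment ℝ x y) := (convex_segment x y).isPreconnected
  have hne : (segment ℝ x y ∩ frontier S).Nonempty := by
    by_contra h
    rw [Set.not_nonempty_iff_eq_empty] at h
    have hsub : segment ℝ x y ⊆ interior S ∪ interior Sᶜ := by
      intro z hz
      have hzf : z ∉ frontier S := fun hf => by
        have : z ∈ segment ℝ x y ∩ frontier S := ⟨hz, hf⟩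
        simp [h] at this
      by_cases hzc : z ∈ closure S
      · left
        rcases (not_and_or.mp (by rwa [frontier, Set.mem_diff] at hzf)) with h1 | h2
        · exact absurd hzc h1
        · simpa using h2
      · right; rwa [interior_compl, Set.mem_compl_iff]
    have hx' : x ∈ interior S := by
      have hxf : x ∉ frontier S := fun hf => by
        have : x ∈ segment ℝ x y ∩ frontier S := ⟨left_mem_segment ℝ x y, hf⟩
        simp [h] at this
      rcases hsub (left_mem_segment ℝ x y) with h1 | h1
      · exact h1
      · exact absurd (subset_closure hx) (by simpa using h1)
    have hy' : y ∈ interior Sᶜ := by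
      rcases hsub (right_mem_segment ℝ x y) with h1 | h1
      · exact absurd (interior_subset h1) hy
      · exact h1
    obtain ⟨z, hz⟩ := hseg (interior S) (interior Sᶜ) isOpen_interior isOpen_interior hsub
      ⟨x, left_mem_segment ℝ x y, hx'⟩ ⟨y, right_mem_segment ℝ x y, hy'⟩
    exact (by simpa using interior_subset hz.2.2 : z ∉ S) (interior_subset hz.2.1)
  obtain ⟨z, hzseg, hzf⟩ := hne
  refine ⟨z, hzf, ?_⟩
  obtain ⟨a, b, ha, hb, hab, rfl⟩ := hzseg
  have : x - (a • x + b • y) = b • (x - y) := by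
    rw [smul_sub]
    rw [show (a:ℝ) = 1 - b by linarith]
    module
  rw [dist_eq_norm, this, norm_smul, dist_eq_norm]
  calc ‖b‖ * ‖x - y‖ ≤ 1 * ‖x - y‖ := by
        apply mul_le_mul_of_nonneg_right _ (norm_nonneg _)
        rw [Real.norm_eq_abs, abs_of_nonneg hb]; linarith
    _ = ‖x - y‖ := one_mul _

lemma sDist_le_sDist_frontier {n : ℕ} {E F S : Set (Rn n)} (hE : E.Nonempty) (hF : F.Nonempty)
    (hES : ∀ x ∈ E, x ∈ S) (hFS : ∀ y ∈ F, y ∉ S) :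
    sDist E (frontier S) ≤ sDist E F := by
  apply le_sDist hE hF
  intro x hx y hy
  obtain ⟨z, hzf, hzd⟩ := exists_frontier_dist S (hES x hx) (hFS y hy)
  exact le_trans (sDist_le_dist hx hzf) hzd

lemma sDist_frontier_le_of_disjoint {n : ℕ} {E F : Set (Rn n)} (hE : E.Nonempty) (hF : F.Nonempty)
    (h : ∀ x ∈ E, x ∉ F) : sDist E (frontier F) ≤ sDist E F := by
  rw [← frontier_compl]
  exact sDist_le_sDist_frontier hE hF (fun x hx => h x hx) (fun y hy => by simp [hy])

lemma cube_toSet_nonempty {n : ℕ} (A : Cube n) : A.toSet.Nonempty :=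
  ⟨A.corner, fun i => ⟨le_refl _, by linarith [A.len_pos]⟩⟩

end AuxMetric

namespace DyadicAux

variable {n : ℕ} {ω : ℤ → Rn n}

def tailEquiv (k : ℤ) : ℕ ≃ {j : ℤ | k < j} where
  toFun m := ⟨k + 1 + m, by simp only [Set.mem_setOf_eq]; omega⟩
  invFun j := (j.1 - k - 1).toNat
  left_inv m := by show ((k + 1 + (m:ℤ)) - k - 1).toNat = m; omega
  right_inv j := Subtype.ext (by show k + 1 + (((j.1 - k - 1).toNat : ℤ)) = j.1; have := j.2; simp only [Set.mem_setOf_eq] at this; omega)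

lemma summable_tail (hω : IsGridParam ω) (k : ℤ) (i : Fin n) :
    Summable (fun j : {j : ℤ | k < j} => (2:ℝ)^(-j.1) * ω j.1 i) := by
  have hg : Summable (fun j : {j : ℤ | k < j} => (2:ℝ)^(-j.1)) := by
    rw [← (tailEquiv k).summable_iff]
    have heq : (fun j : {j : ℤ | k < j} => (2:ℝ)^(-j.1)) ∘ (tailEquiv k)
        = fun m : ℕ => (2:ℝ)^(-(k+1)) * (2⁻¹)^m := by
      funext m
      simp only [Function.comp_apply, tailEquiv, Equiv.coe_fn_mk]
      rw [show -(k + 1 + (m:ℤ)) = -(k+1) + (-(m:ℤ)) by ring, zpow_add₀ (two_ne_zero)]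
      congr 1
      rw [zpow_neg, zpow_natCast, ← inv_pow]
    rw [heq]
    exact (summable_geometric_of_lt_one (by norm_num) (by norm_num)).mul_left _
  apply Summable.of_nonneg_of_le _ _ hg
  · intro j
    rcases hω j.1 i with h | h <;> simp [h] <;> positivity
  · intro j
    rcases hω j.1 i with h | h <;> simp [h] <;> positivity

lemma tail_step (hω : IsGridParam ω) (k : ℤ) (i : Fin n) :
    (∑' j : {j : ℤ // k - 1 < j}, (2:ℝ)^(-j.1) * ω j.1 i)
      = (2:ℝ)^(-k) * ω k i + ∑' j : {j : ℤ // k < j}, (2:ℝ)^(-j.1) * ω j.1 i := by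
  have hset : {j : ℤ | k - 1 < j} = ({k} : Set ℤ) ∪ {j : ℤ | k < j} := by
    ext j; simp; omega
  have hd : Disjoint ({k} : Set ℤ) {j : ℤ | k < j} := by
    rw [Set.disjoint_left]; rintro j rfl; simp
  have h1 : (∑' j : {j : ℤ | k - 1 < j}, (2:ℝ)^(-j.1) * ω j.1 i)
      = ∑' j : ↥(({k} : Set ℤ) ∪ {j : ℤ | k < j}), (2:ℝ)^(-j.1) * ω j.1 i := by
    rw [← hset]
  have h2 := Summable.tsum_union_disjoint (f := fun j : ℤ => (2:ℝ)^(-j) * ω j i) hd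
    (Set.Finite.summable (Set.finite_singleton k) _)
    (summable_tail hω k i)
  show (∑' j : {j : ℤ | k - 1 < j}, (2:ℝ)^(-j.1) * ω j.1 i) = _
  rw [h1, h2]
  congr 1
  · simpa using tsum_singleton k (fun j : ℤ => (2:ℝ)^(-j) * ω j i)

lemma gridCube_len (k : ℤ) (m : Fin n → ℤ) : (gridCube n ω k m).len = (2:ℝ)^(-k) := rfl

lemma gridCube_corner (k : ℤ) (m : Fin n → ℤ) (i : Fin n) :
    (gridCube n ω k m).corner i
      = (2:ℝ)^(-k) * (m i : ℝ) + ∑' j : {j : ℤ // k < j}, (2:ℝ)^(-j.1) * ω j.1 i := rfl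

lemma exists_parent (hω : IsGridParam ω) (k : ℤ) (m : Fin n → ℤ) :
    ∃ m' : Fin n → ℤ, (gridCube n ω k m).toSet ⊆ (gridCube n ω (k-1) m').toSet := by
  classical
  set b : Fin n → ℤ := fun i => if ω k i = 1 then 1 else 0 with hb
  refine ⟨fun i => (m i - b i) / 2, fun x hx i => ?_⟩
  obtain ⟨h1, h2⟩ := hx i
  rw [Cube.toSet, Set.mem_setOf_eq] at *
  have hbr : ((b i : ℤ) : ℝ) = ω k i := by
    rcases hω k i with h | h <;> simp [hb, h]
  have hstep := tail_step hω k i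
  have hcor : (gridCube n ω (k-1) (fun i => (m i - b i) / 2)).corner i
      = (2:ℝ)^(-(k-1)) * (((m i - b i) / 2 : ℤ) : ℝ) + (2:ℝ)^(-k) * ((b i : ℤ) : ℝ)
        + ∑' j : {j : ℤ // k < j}, (2:ℝ)^(-j.1) * ω j.1 i := by
    rw [gridCube_corner, show -(k-1) = -k+1 by ring] at *
    rw [hstep, hbr]
    ring
  have hlen : (gridCube n ω (k-1) (fun i => (m i - b i) / 2)).len = 2 * (2:ℝ)^(-k) := by
    rw [gridCube_len, show -(k-1) = -k+1 by ring, zpow_add₀ two_ne_zero]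
    ring
  rw [gridCube_len] at h2
  rw [gridCube_corner] at h1 h2
  have hq1 : 2 * ((m i - b i) / 2) ≤ m i - b i := by omega
  have hq2 : m i - b i ≤ 2 * ((m i - b i) / 2) + 1 := by omega
  have hq1r : 2 * (((m i - b i) / 2 : ℤ) : ℝ) ≤ ((m i : ℤ) : ℝ) - ((b i : ℤ) : ℝ) := by
    exact_mod_cast hq1
  have hq2r : ((m i : ℤ) : ℝ) - ((b i : ℤ) : ℝ) ≤ 2 * (((m i - b i) / 2 : ℤ) : ℝ) + 1 := by
    exact_mod_cast hq2
  have hp : (0:ℝ) < (2:ℝ)^(-k) := by positivity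
  have h2k : (2:ℝ)^(-(k-1)) = 2 * (2:ℝ)^(-k) := by
    rw [show -(k-1) = -k+1 by ring, zpow_add₀ two_ne_zero]; ring
  constructor
  · rw [hcor, h2k]; nlinarith [mul_le_mul_of_nonneg_left hq1r (le_of_lt hp)]
  · rw [hcor, hlen, h2k]
    have hmul : (2:ℝ)^(-k) * (((m i):ℝ) - ((b i):ℝ)) ≤ (2:ℝ)^(-k) * (2 * (((m i - b i) / 2 : ℤ) : ℝ) + 1) :=
      mul_le_mul_of_nonneg_left hq2r (le_of_lt hp)
    nlinarith [hmul]

lemma exists_ancestor (hω : IsGridParam ω) (k : ℤ) (m : Fin n → ℤ) (r : ℕ) :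
    ∃ m' : Fin n → ℤ, (gridCube n ω k m).toSet ⊆ (gridCube n ω (k - r) m').toSet := by
  induction r with
  | zero => exact ⟨m, by norm_num⟩
  | succ p ih =>
    obtain ⟨m', hm'⟩ := ih
    obtain ⟨m'', hm''⟩ := exists_parent hω (k - p) m'
    refine ⟨m'', ?_⟩
    rw [show (k - (p+1 : ℕ) : ℤ) = k - p - 1 by push_cast; ring]
    exact hm'.trans hm''

lemma same_level_eq (k : ℤ) (m m' : Fin n → ℤ) {x : Rn n}
    (hx : x ∈ (gridCube n ω k m).toSet) (hx' : x ∈ (gridCube n ω k m').toSet) : m = m' := by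
  funext i
  obtain ⟨h1, h2⟩ := hx i
  obtain ⟨h3, h4⟩ := hx' i
  rw [gridCube_corner, gridCube_len] at *
  have hp : (0:ℝ) < (2:ℝ)^(-k) := by positivity
  have : |((m i : ℤ) : ℝ) - ((m' i : ℤ) : ℝ)| < 1 := by
    rw [abs_lt]; constructor <;> nlinarith
  have : ((m i : ℤ) : ℝ) = ((m' i : ℤ) : ℝ) := by
    have := abs_lt.mp this
    have hint : (m i : ℝ) - (m' i : ℝ) = ((m i - m' i : ℤ) : ℝ) := by push_cast; ring
    by_contra hne
    have : m i ≠ m' i := fun h => hne (by rw [h])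
    have h1 : (1:ℤ) ≤ |m i - m' i| := Int.one_le_abs (by omega)
    have : (1:ℝ) ≤ |(m i : ℝ) - (m' i : ℝ)| := by
      rw [hint, ← Int.cast_abs]
      exact_mod_cast h1
    linarith [abs_lt.mp ‹|((m i : ℤ) : ℝ) - ((m' i : ℤ) : ℝ)| < 1›]
  exact_mod_cast this

lemma grid_subset_or_disjoint (hω : IsGridParam ω) {A B : Cube n}
    (hA : memGrid ω A) (hB : memGrid ω B) (h : A.len ≤ B.len) :
    A.toSet ⊆ B.toSet ∨ A.toSet ∩ B.toSet = ∅ := by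
  obtain ⟨k, m, rfl⟩ := hA
  obtain ⟨k', m', rfl⟩ := hB
  rw [gridCube_len, gridCube_len, zpow_le_zpow_iff_right₀ one_lt_two, neg_le_neg_iff] at h
  obtain ⟨m'', hm''⟩ := exists_ancestor hω k m (k - k').toNat
  rw [show (k - (k - k').toNat : ℤ) = k' by omega] at hm''
  by_cases hx : ((gridCube n ω k m).toSet ∩ (gridCube n ω k' m').toSet).Nonempty
  · obtain ⟨x, hx1, hx2⟩ := hx
    have := same_level_eq k' m'' m' (hm'' hx1) hx2
    left; rw [← this]; exact hm''
  · right; exact Set.not_nonempty_iff_eq_empty.mp hx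

end DyadicAux

/-- common dyadic ancestor in the adjacent case. -/
theorem common_ancestor_adjacent
    (n : ℕ) (hn : 1 ≤ n) (r : ℕ) (hr : 1 ≤ r) (γ : ℝ) (hγ0 : 0 < γ) (hγ1 : γ < 1 / 2)
    (ω : ℤ → Rn n) (hω : IsGridParam ω)
    (I J K : Cube n) (hI : memGrid ω I) (hJ : memGrid ω J) (hK : memGrid ω K)
    (hKgood : IsGoodCube ω r γ K)
    (hKI : K.len ≤ I.len) (hIJ : I.len = 2 * J.len)
    (hsep : max (sDist K.toSet I.toSet) (sDist K.toSet J.toSet) ≤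
      2 * K.len ^ γ * J.len ^ (1 - γ))
    (hcase : K.toSet ∩ I.toSet = ∅ ∨ K = I ∨ K.toSet ∩ J.toSet = ∅) :
    ∃ Q : Cube n, memGrid ω Q ∧ I.toSet ∪ J.toSet ∪ K.toSet ⊆ Q.toSet ∧
      Q.len ≤ (2 : ℝ) ^ r * K.len := by
  obtain ⟨kI, mI, hIeq⟩ := hI
  obtain ⟨kJ, mJ, hJeq⟩ := hJ
  obtain ⟨kK, mK, hKeq⟩ := hK
  have hlenI : I.len = (2:ℝ)^(-kI) := by rw [hIeq]; rfl
  have hlenJ : J.len = (2:ℝ)^(-kJ) := by rw [hJeq]; rfl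
  have hlenK : K.len = (2:ℝ)^(-kK) := by rw [hKeq]; rfl
  have hKpos := K.len_pos
  have hJpos := J.len_pos
  have hIpos := I.len_pos
  have hγ' : (0:ℝ) ≤ 1 - γ := by linarith
  have hkJ : kJ = kI + 1 := by
    have h0 : (2:ℝ)^(-kI) = (2:ℝ)^(-(kJ - 1)) := by
      rw [← hlenI, hIJ, hlenJ, show -(kJ-1) = -kJ + 1 by ring, zpow_add₀ two_ne_zero]
      ring
    have := zpow_right_injective₀ (two_pos) (by norm_num : (2:ℝ) ≠ 1) h0
    omega
  have hkIK : kI ≤ kK := by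
    rw [hlenK, hlenI, zpow_le_zpow_iff_right₀ one_lt_two] at hKI
    omega
  have hKne := cube_toSet_nonempty K
  have hIne := cube_toSet_nonempty I
  have hJne := cube_toSet_nonempty J
  have hsepI : sDist K.toSet I.toSet ≤ 2 * K.len ^ γ * J.len ^ (1 - γ) :=
    le_trans (le_max_left _ _) hsep
  have hsepJ : sDist K.toSet J.toSet ≤ 2 * K.len ^ γ * J.len ^ (1 - γ) :=
    le_trans (le_max_right _ _) hsep
  -- Claim: kK - r < kJ
  have hclaim : kK - (r:ℤ) < kJ := by
    rcases hcase with hd | heq | hd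
    · by_contra hcon
      push_neg at hcon
      have hlen : (2:ℝ)^r * K.len ≤ I.len := by
        rw [hlenK, hlenI, ← zpow_natCast (2:ℝ) r, ← zpow_add₀ two_ne_zero]
        apply zpow_le_zpow_right₀ one_le_two
        omega
      have hgood := hKgood I ⟨kI, mI, hIeq⟩ hlen
      have hfr := sDist_frontier_le_of_disjoint hKne hIne
        (fun x hx hxI => by
          have : x ∈ K.toSet ∩ I.toSet := ⟨hx, hxI⟩
          rw [hd] at this
          exact this)
      have hJI : J.len ≤ I.len := by linarith
      have hmono : 2 * K.len ^ γ * J.len ^ (1 - γ) ≤ 2 * K.len ^ γ * I.len ^ (1 - γ) :=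
        mul_le_mul_of_nonneg_left (Real.rpow_le_rpow hJpos.le hJI hγ') (by positivity)
      linarith
    · have : kK = kI := by
        have h0 : (2:ℝ)^(-kK) = (2:ℝ)^(-kI) := by rw [← hlenK, ← hlenI, heq]
        have := zpow_right_injective₀ (two_pos) (by norm_num : (2:ℝ) ≠ 1) h0
        omega
      omega
    · by_contra hcon
      push_neg at hcon
      have hlen : (2:ℝ)^r * K.len ≤ J.len := by
        rw [hlenK, hlenJ, ← zpow_natCast (2:ℝ) r, ← zpow_add₀ two_ne_zero]
        apply zpow_le_zpow_right₀ one_le_two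
        omega
      have hgood := hKgood J ⟨kJ, mJ, hJeq⟩ hlen
      have hfr := sDist_frontier_le_of_disjoint hKne hJne
        (fun x hx hxJ => by
          have : x ∈ K.toSet ∩ J.toSet := ⟨hx, hxJ⟩
          rw [hd] at this
          exact this)
      linarith
  -- The common ancestor Q
  obtain ⟨mQ, hQsub⟩ := DyadicAux.exists_ancestor hω kK mK r
  set Q := gridCube n ω (kK - (r:ℤ)) mQ with hQdef
  have hQmem : memGrid ω Q := ⟨kK - (r:ℤ), mQ, rfl⟩
  have hQlen : Q.len = (2:ℝ)^r * K.len := by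
    rw [hlenK]
    show (2:ℝ)^(-(kK - (r:ℤ))) = (2:ℝ)^r * (2:ℝ)^(-kK)
    rw [← zpow_natCast (2:ℝ) r, ← zpow_add₀ two_ne_zero]
    congr 1
    ring
  have hKQ : K.toSet ⊆ Q.toSet := by rw [hKeq]; exact hQsub
  have hgoodQ := hKgood Q hQmem (le_of_eq hQlen.symm)
  have hJQlen : J.len ≤ Q.len := by
    rw [hlenJ, hQdef, DyadicAux.gridCube_len]
    apply zpow_le_zpow_right₀ one_le_two
    omega
  have hmonoQ : 2 * K.len ^ γ * J.len ^ (1 - γ) ≤ 2 * K.len ^ γ * Q.len ^ (1 - γ) :=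
    mul_le_mul_of_nonneg_left (Real.rpow_le_rpow hJpos.le hJQlen hγ') (by positivity)
  have hsubQ : ∀ (X : Cube n), memGrid ω X → X.len ≤ Q.len → X.toSet.Nonempty →
      sDist K.toSet X.toSet ≤ 2 * K.len ^ γ * J.len ^ (1 - γ) → X.toSet ⊆ Q.toSet := by
    intro X hXmem hXlen hXne hXsep
    rcases DyadicAux.grid_subset_or_disjoint hω hXmem hQmem hXlen with h | h
    · exact h
    · exfalso
      have hfr : sDist K.toSet (frontier Q.toSet) ≤ sDist K.toSet X.toSet := by
        apply sDist_le_sDist_frontier hKne hXne hKQ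
        intro y hy hyQ
        have : y ∈ X.toSet ∩ Q.toSet := ⟨hy, hyQ⟩
        rw [h] at this
        exact this
      linarith
  have hIQ : I.toSet ⊆ Q.toSet := by
    apply hsubQ I ⟨kI, mI, hIeq⟩ _ hIne hsepI
    rw [hlenI, hQdef, DyadicAux.gridCube_len]
    apply zpow_le_zpow_right₀ one_le_two
    omega
  have hJQ : J.toSet ⊆ Q.toSet := by
    apply hsubQ J ⟨kJ, mJ, hJeq⟩ hJQlen hJne hsepJ
  exact ⟨Q, hQmem, by
    intro x hx
    rcases hx with (hx | hx) | hx
    · exact hIQ hx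
    · exact hJQ hx
    · exact hKQ hx, le_of_eq hQlen⟩
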